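/- Let a : [0,T] → ℝ be continuous with a(t) ≥ a₀ > 0, and let β ≥ 1. Then every solution v ∈ C²([0,T], ℂ) of v''(t) + a(t) β² v(t) = 0 with initial data v(0) = v₀, v'(0) = v₁ satisfies, for some constants M, δ > 0 depending only on a, T (not on β, v₀, v₁): β² |v(t)|² + |v'(t)|² ≤ M² β^{δT} (β² |v₀|² + |v₁|²) for all t ∈ [0,T], provided a is Log-Lipschitz. -/

import Mathlib

lemma aux_mul_log_mono {x y : ℝ} (hx : 0 < x) (hxy : x ≤ y) (hy : y ≤ Real.exp (-1)) :
    x * |Real.log x| ≤ y * |Real.log y| := by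
  have hy0 : 0 < y := hx.trans_le hxy
  have hlogx : Real.log x ≤ -1 := by
    have := Real.log_le_log hx (hxy.trans hy)
    simpa [Real.log_exp] using this
  have hlogy : Real.log y ≤ -1 := by
    have := Real.log_le_log hy0 hy
    simpa [Real.log_exp] using this
  rw [abs_of_nonpos (by linarith), abs_of_nonpos (by linarith)]
  have key : MonotoneOn (fun t => -(t * Real.log t)) (Set.Icc x (Real.exp (-1))) := by
    apply monotoneOn_of_deriv_nonneg (convex_Icc _ _)
    · exact (Real.continuous_mul_log.neg).continuousOn
    · intro t ht
      rw [interior_Icc] at ht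
      exact ((Real.hasDerivAt_mul_log (hx.trans ht.1).ne').neg).differentiableAt.differentiableWithinAt
    · intro t ht
      rw [interior_Icc] at ht
      have ht0 : (0:ℝ) < t := hx.trans ht.1
      rw [HasDerivAt.deriv (f := fun t => -(t * Real.log t)) ((Real.hasDerivAt_mul_log ht0.ne').neg)]
      have : Real.log t ≤ -1 := by
        have := Real.log_le_log ht0 ht.2.le
        simpa [Real.log_exp] using this
      linarith
  have := key (Set.mem_Icc.2 ⟨le_refl x, hxy.trans hy⟩) (Set.mem_Icc.2 ⟨hxy, hy⟩) hxy
  simpa [neg_mul, mul_comm] using this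

lemma aux_normsq (z : ℂ) : ‖z‖^2 = z.re*z.re + z.im*z.im := by
  rw [← Complex.normSq_apply, Complex.sq_norm]

lemma aux_re_deriv {v : ℝ → ℂ} {w : ℂ} {t : ℝ} (h : HasDerivAt v w t) :
    HasDerivAt (fun s => (v s).re) w.re t :=
  Complex.reCLM.hasFDerivAt.comp_hasDerivAt t h

lemma aux_im_deriv {v : ℝ → ℂ} {w : ℂ} {t : ℝ} (h : HasDerivAt v w t) :
    HasDerivAt (fun s => (v s).im) w.im t :=
  Complex.imCLM.hasFDerivAt.comp_hasDerivAt t h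

lemma aux_normsq_deriv {v : ℝ → ℂ} {w : ℂ} {t : ℝ} (h : HasDerivAt v w t) :
    HasDerivAt (fun s => (v s).re*(v s).re + (v s).im*(v s).im)
      (2 * ((v t).re * w.re + (v t).im * w.im)) t := by
  have h1 := (aux_re_deriv h).mul (aux_re_deriv h)
  have h2 := (aux_im_deriv h).mul (aux_im_deriv h)
  exact (h1.add h2).congr_deriv (by ring)

lemma aux_amgm (β xr xi yr yi : ℝ) :
    |2 * β * (xr * yr + xi * yi)| ≤ β^2 * (xr*xr + xi*xi) + (yr*yr + yi*yi) := by
  rw [abs_le]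
  constructor <;> nlinarith [sq_nonneg (β*xr + yr), sq_nonneg (β*xi + yi),
    sq_nonneg (β*xr - yr), sq_nonneg (β*xi - yi)]

set_option maxHeartbeats 1000000 in
theorem stmt_9 (T C a₀ : ℝ) (hT : 0 < T) (hC : 0 < C) (ha₀ : 0 < a₀)
    (a : ℝ → ℝ) (hcont : ContinuousOn a (Set.Icc 0 T))
    (hlb : ∀ t ∈ Set.Icc (0:ℝ) T, a₀ ≤ a t)
    (hLL : ∀ t ∈ Set.Icc (0:ℝ) T, ∀ s ∈ Set.Icc (0:ℝ) T, t ≠ s →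
      |a t - a s| ≤ C * |t - s| * |Real.log (|t - s|)|) :
    ∃ M : ℝ, 0 < M ∧ ∃ δ : ℝ, 0 < δ ∧
      ∀ β : ℝ, 1 ≤ β → ∀ v v' v'' : ℝ → ℂ, ∀ v₀ v₁ : ℂ,
        (∀ t ∈ Set.Icc (0:ℝ) T, HasDerivAt v (v' t) t) →
        (∀ t ∈ Set.Icc (0:ℝ) T, HasDerivAt v' (v'' t) t) →
        (∀ t ∈ Set.Icc (0:ℝ) T, v'' t + (a t * β ^ 2 : ℝ) * v t = 0) →
        v 0 = v₀ → v' 0 = v₁ →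
        ∀ t ∈ Set.Icc (0:ℝ) T,
          β ^ 2 * ‖v t‖ ^ 2 + ‖v' t‖ ^ 2 ≤
            M ^ 2 * β ^ (δ * T) * (β ^ 2 * ‖v₀‖ ^ 2 + ‖v₁‖ ^ 2) := by
  -- extension of a to all of ℝ
  set p : ℝ → ℝ := fun t => max 0 (min t T) with hp
  have hp_mem : ∀ t, p t ∈ Set.Icc (0:ℝ) T := fun t =>
    ⟨le_max_left _ _, max_le hT.le (min_le_right t T)⟩
  have hp_eq : ∀ t ∈ Set.Icc (0:ℝ) T, p t = t := by
    intro t ht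
    simp [hp, min_eq_left ht.2, max_eq_right ht.1]
  have hp_lip : ∀ t s, |p t - p s| ≤ |t - s| := by
    intro t s
    calc |p t - p s| = |max (min t T) 0 - max (min s T) 0| := by
          rw [hp]; ring_nf; rw [max_comm, max_comm (min s T)]
    _ ≤ |min t T - min s T| := abs_max_sub_max_le_abs _ _ _
    _ ≤ max |t - s| |T - T| := abs_min_sub_min_le_max _ _ _ _
    _ ≤ |t - s| := by simp
  set A : ℝ → ℝ := fun t => a (p t) with hA
  have hA_cont : Continuous A := hcont.comp_continuous (by fun_prop) hp_mem
  have hA_lb : ∀ t, a₀ ≤ A t := fun t => hlb _ (hp_mem t)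
  have hA_eq : ∀ t ∈ Set.Icc (0:ℝ) T, A t = a t := by
    intro t ht; rw [hA]; simp only [hp_eq t ht]
  -- upper bound for a
  obtain ⟨x₀, hx₀, hmax'⟩ := isCompact_Icc.exists_isMaxOn
    (Set.nonempty_Icc.2 hT.le) hcont
  have hmax : ∀ y ∈ Set.Icc (0:ℝ) T, a y ≤ a x₀ := fun y hy => hmax' hy
  set Amax : ℝ := a x₀ with hAmax
  have hAmax_pos : 0 < Amax := ha₀.trans_le (hlb x₀ hx₀)
  have hA_ub : ∀ t, A t ≤ Amax := fun t => hmax _ (hp_mem t)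
  -- log-Lipschitz for the extension
  have hA_LL : ∀ t s : ℝ, |t - s| ≤ Real.exp (-1) →
      |A t - A s| ≤ C * (|t - s| * |Real.log (|t - s|)|) := by
    intro t s hd
    by_cases hps : p t = p s
    · have : |A t - A s| = 0 := by rw [hA]; simp only [hps, sub_self, abs_zero]
      rw [this]; positivity
    · have h1 := hLL (p t) (hp_mem t) (p s) (hp_mem s) hps
      have hd0 : 0 < |p t - p s| := abs_pos.2 (sub_ne_zero.2 hps)
      have h2 : |p t - p s| * |Real.log (|p t - p s|)| ≤ |t - s| * |Real.log (|t - s|)| :=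
        aux_mul_log_mono hd0 (hp_lip t s) hd
      calc |A t - A s| ≤ C * |p t - p s| * |Real.log (|p t - p s|)| := h1
        _ = C * (|p t - p s| * |Real.log (|p t - p s|)|) := by ring
        _ ≤ C * (|t - s| * |Real.log (|t - s|)|) := mul_le_mul_of_nonneg_left h2 hC.le
  -- antiderivative
  set F : ℝ → ℝ := fun x => ∫ s in (0:ℝ)..x, A s with hF
  have hF' : ∀ x, HasDerivAt F (A x) x := fun x =>
    intervalIntegral.integral_hasDerivAt_right (hA_cont.intervalIntegrable _ _)
      hA_cont.stronglyMeasurable.stronglyMeasurableAtFilter hA_cont.continuousAt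
  have hFdiff : ∀ t ε : ℝ, F (t + ε) - F t = ∫ s in t..(t+ε), A s := by
    intro t ε
    have h := intervalIntegral.integral_add_adjacent_intervals
      (hA_cont.intervalIntegrable (μ := MeasureTheory.volume) 0 t)
      (hA_cont.intervalIntegrable (μ := MeasureTheory.volume) t (t+ε))
    simp only [hF]
    linarith
  -- the constants
  set δ₀ : ℝ := C * (2 * a₀⁻¹ + 1) with hδ₀
  have hδ₀_pos : 0 < δ₀ := by positivity
  set Mv : ℝ := Real.sqrt ((a₀⁻¹ + 1) * (Amax + 1) * Real.exp (δ₀ * T)) with hMv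
  have hMarg_pos : 0 < (a₀⁻¹ + 1) * (Amax + 1) * Real.exp (δ₀ * T) := by positivity
  refine ⟨Mv, Real.sqrt_pos.2 hMarg_pos, δ₀, hδ₀_pos, ?_⟩
  have hM2 : Mv ^ 2 = (a₀⁻¹ + 1) * (Amax + 1) * Real.exp (δ₀ * T) :=
    Real.sq_sqrt hMarg_pos.le
  intro β hβ v v' v'' v₀ v₁ hv hv' hode hv0 hv1 t ht
  have hβ0 : (0:ℝ) < β := lt_of_lt_of_le one_pos hβ
  -- the regularization parameter
  set ε : ℝ := (Real.exp 1 * β)⁻¹ with hε_def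
  have hε : 0 < ε := by positivity
  have hεe : ε ≤ Real.exp (-1) := by
    rw [hε_def, Real.exp_neg]
    apply inv_anti₀ (Real.exp_pos 1)
    exact le_mul_of_one_le_right (Real.exp_pos 1).le hβ
  set L : ℝ := 1 + Real.log β with hLdef
  have hlogβ : 0 ≤ Real.log β := Real.log_nonneg hβ
  have hL1 : 1 ≤ L := by rw [hLdef]; linarith
  have hlogε : |Real.log ε| = L := by
    rw [hε_def, Real.log_inv, Real.log_mul (Real.exp_ne_zero 1) hβ0.ne', Real.log_exp,
      abs_neg, hLdef, abs_of_nonneg (by linarith)]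
  have hβε : β * ε ≤ 1 := by
    have h1 : β * ε = (Real.exp 1)⁻¹ := by
      rw [hε_def, mul_inv]
      field_simp
    rw [h1]
    rw [inv_le_one_iff₀]
    right
    exact Real.one_le_exp zero_le_one
  -- the regularized coefficient
  set aε : ℝ → ℝ := fun t => (F (t + ε) - F t) / ε with haεdef
  have haε' : ∀ t, HasDerivAt aε ((A (t + ε) - A t) / ε) t := by
    intro t
    have h1 : HasDerivAt (fun t => F (t + ε)) (A (t + ε)) t := by
      simpa [Function.comp_def] using (hF' (t + ε)).comp t ((hasDerivAt_id t).add_const ε)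
    exact (h1.sub (hF' t)).div_const ε
  have haε_lb : ∀ t, a₀ ≤ aε t := by
    intro t
    show a₀ ≤ (F (t + ε) - F t) / ε
    rw [le_div_iff₀ hε]
    calc a₀ * ε = ∫ _ in t..(t+ε), a₀ := by simp [intervalIntegral.integral_const]; ring
    _ ≤ ∫ s in t..(t+ε), A s := by
        apply intervalIntegral.integral_mono_on (by linarith)
          (intervalIntegrable_const) (hA_cont.intervalIntegrable _ _)
        intro x _; exact hA_lb x
    _ = F (t + ε) - F t := (hFdiff t ε).symm
  have haε_ub : ∀ t, aε t ≤ Amax := by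
    intro t
    show (F (t + ε) - F t) / ε ≤ Amax
    rw [div_le_iff₀ hε]
    calc F (t + ε) - F t = ∫ s in t..(t+ε), A s := hFdiff t ε
    _ ≤ ∫ _ in t..(t+ε), Amax := by
        apply intervalIntegral.integral_mono_on (by linarith)
          (hA_cont.intervalIntegrable _ _) intervalIntegrable_const
        intro x _; exact hA_ub x
    _ = Amax * ε := by simp [intervalIntegral.integral_const]; ring
  have haεd_bd : ∀ t, |(A (t + ε) - A t) / ε| ≤ C * L := by
    intro t
    rw [abs_div, abs_of_pos hε, div_le_iff₀ hε]
    have h := hA_LL (t + ε) t (by simp [abs_of_pos hε, hεe])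
    calc |A (t + ε) - A t| ≤ C * (|t + ε - t| * |Real.log (|t + ε - t|)|) := h
    _ = C * L * ε := by
        rw [show t + ε - t = ε by ring, abs_of_pos hε, hlogε]; ring
  have haε_close : ∀ t, |aε t - A t| ≤ C * (ε * L) := by
    intro t
    have key : aε t - A t = (∫ s in t..(t+ε), (A s - A t)) / ε := by
      show (F (t + ε) - F t) / ε - A t = _
      rw [hFdiff]
      rw [intervalIntegral.integral_sub (hA_cont.intervalIntegrable _ _)
        intervalIntegrable_const, intervalIntegral.integral_const]
      field_simp
      simp only [smul_eq_mul]; ring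
    rw [key, abs_div, abs_of_pos hε, div_le_iff₀ hε]
    have hb : ∀ x ∈ Set.uIoc t (t+ε), ‖A x - A t‖ ≤ C * (ε * L) := by
      intro x hx
      rw [Set.uIoc_of_le (by linarith)] at hx
      have hxt : 0 < x - t := by linarith [hx.1]
      have hxε : x - t ≤ ε := by linarith [hx.2]
      have h1 := hA_LL x t (by rw [abs_of_pos hxt]; linarith)
      rw [Real.norm_eq_abs]
      have h2 := aux_mul_log_mono hxt hxε hεe
      calc |A x - A t| ≤ C * (|x - t| * |Real.log (|x - t|)|) := h1
      _ = C * ((x - t) * |Real.log (x - t)|) := by rw [abs_of_pos hxt]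
      _ ≤ C * (ε * |Real.log ε|) := mul_le_mul_of_nonneg_left h2 hC.le
      _ = C * (ε * L) := by rw [hlogε]
    calc |∫ s in t..(t+ε), (A s - A t)| ≤ C * (ε * L) * |t + ε - t| :=
        intervalIntegral.norm_integral_le_of_norm_le_const hb
    _ = C * (ε * L) * ε := by rw [show t + ε - t = ε by ring, abs_of_pos hε]
  -- energy quantities
  set N : ℝ → ℝ := fun s => (v s).re*(v s).re + (v s).im*(v s).im with hN
  set P : ℝ → ℝ := fun s => (v' s).re*(v' s).re + (v' s).im*(v' s).im with hP
  set D : ℝ → ℝ := fun s => (v s).re*(v' s).re + (v s).im*(v' s).im with hD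
  set Dp : ℝ → ℝ := fun s => (v' s).re*(v'' s).re + (v' s).im*(v'' s).im with hDp
  have hN_nonneg : ∀ s, 0 ≤ N s := fun s =>
    add_nonneg (mul_self_nonneg _) (mul_self_nonneg _)
  have hP_nonneg : ∀ s, 0 ≤ P s := fun s =>
    add_nonneg (mul_self_nonneg _) (mul_self_nonneg _)
  set E : ℝ → ℝ := fun s => aε s * (β^2 * N s) + P s with hE
  set E' : ℝ → ℝ := fun s =>
    (A (s + ε) - A s) / ε * (β^2 * N s) + aε s * (β^2 * (2 * D s)) + 2 * Dp s with hE'def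
  have hE_nonneg : ∀ s, 0 ≤ E s := by
    intro s
    have h3 := hP_nonneg s
    have : 0 ≤ aε s * (β^2 * N s) :=
      mul_nonneg (ha₀.le.trans (haε_lb s)) (mul_nonneg (sq_nonneg β) (hN_nonneg s))
    simp only [hE]; linarith
  have hEderiv : ∀ s ∈ Set.Icc (0:ℝ) T, HasDerivAt E (E' s) s := by
    intro s hs
    have h1 := (haε' s).mul ((aux_normsq_deriv (hv s hs)).const_mul (β^2))
    have h2 := aux_normsq_deriv (hv' s hs)
    exact h1.add h2
  -- the ODE in components, and derivative identity
  have hode_comp : ∀ s ∈ Set.Icc (0:ℝ) T,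
      (v'' s).re = -(a s * β^2 * (v s).re) ∧ (v'' s).im = -(a s * β^2 * (v s).im) := by
    intro s hs
    have h : v'' s = -((↑(a s * β^2) : ℂ) * v s) := by linear_combination hode s hs
    constructor <;> rw [h] <;>
      simp only [Complex.neg_re, Complex.neg_im, Complex.re_ofReal_mul,
        Complex.im_ofReal_mul] <;> ring
  have hE'_eq : ∀ s ∈ Set.Icc (0:ℝ) T,
      E' s = (A (s + ε) - A s) / ε * (β^2 * N s) + 2 * β^2 * (aε s - a s) * D s := by
    intro s hs
    obtain ⟨hre, him⟩ := hode_comp s hs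
    simp only [hE'def, hDp, hD]
    rw [hre, him]
    ring
  -- bound on E'
  have hbound : ∀ s ∈ Set.Icc (0:ℝ) T, |E' s| ≤ δ₀ * L * E s := by
    intro s hs
    rw [hE'_eq s hs]
    have hβN : a₀ * (β^2 * N s) ≤ E s := by
      have h1 : a₀ * (β^2 * N s) ≤ aε s * (β^2 * N s) :=
        mul_le_mul_of_nonneg_right (haε_lb s)
          (mul_nonneg (sq_nonneg β) (hN_nonneg s))
      have h3 := hP_nonneg s
      simp only [hE]; linarith
    have hPE : P s ≤ E s := by
      have h1 := haε_lb s
      have : 0 ≤ aε s * (β^2 * N s) :=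
        mul_nonneg (ha₀.le.trans (haε_lb s)) (mul_nonneg (sq_nonneg β) (hN_nonneg s))
      simp only [hE]; linarith
    have hNs : (0:ℝ) ≤ β^2 * N s := mul_nonneg (sq_nonneg β) (hN_nonneg s)
    have ht1 : |(A (s + ε) - A s) / ε * (β^2 * N s)| ≤ C * L * (β^2 * N s) := by
      rw [abs_mul, abs_of_nonneg hNs]
      exact mul_le_mul_of_nonneg_right (haεd_bd s) hNs
    have ht2 : |2 * β^2 * (aε s - a s) * D s| ≤ C * L * (β^2 * N s + P s) := by
      have key : 2 * β^2 * (aε s - a s) * D s = (aε s - a s) * β * (2 * β * D s) := by ring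
      rw [key, abs_mul, abs_mul, abs_of_pos hβ0]
      have hamgm : |2 * β * D s| ≤ β^2 * N s + P s := by
        simp only [hD, hN, hP]
        exact aux_amgm β _ _ _ _
      have hclose : |aε s - a s| ≤ C * (ε * L) := by
        rw [← hA_eq s hs]
        exact haε_close s
      calc |aε s - a s| * β * |2 * β * D s|
          ≤ (C * (ε * L)) * β * (β^2 * N s + P s) := by
            apply mul_le_mul
            · exact mul_le_mul_of_nonneg_right hclose hβ0.le
            · exact hamgm
            · exact abs_nonneg _
            · have : (0:ℝ) ≤ C * (ε * L) := by positivity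
              nlinarith
        _ = (C * L) * (β * ε) * (β^2 * N s + P s) := by ring
        _ ≤ (C * L) * 1 * (β^2 * N s + P s) := by
            apply mul_le_mul_of_nonneg_right _ (add_nonneg hNs (hP_nonneg s))
            apply mul_le_mul_of_nonneg_left hβε
            positivity
        _ = C * L * (β^2 * N s + P s) := by ring
    have hCL : 0 < C * L := by nlinarith
    have hsum : |(A (s + ε) - A s) / ε * (β^2 * N s) + 2 * β^2 * (aε s - a s) * D s|
        ≤ C * L * (β^2 * N s) + C * L * (β^2 * N s + P s) :=
      (abs_add_le _ _).trans (add_le_add ht1 ht2)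
    have hNE : β^2 * N s ≤ a₀⁻¹ * E s := by
      have h0 : β^2 * N s = a₀⁻¹ * (a₀ * (β^2 * N s)) := by
        field_simp
      rw [h0]
      exact mul_le_mul_of_nonneg_left hβN (inv_nonneg.2 ha₀.le)
    have h1 : C * L * (β^2 * N s) ≤ C * L * (a₀⁻¹ * E s) :=
      mul_le_mul_of_nonneg_left hNE hCL.le
    have h2 : C * L * (β^2 * N s + P s) ≤ C * L * (a₀⁻¹ * E s + E s) :=
      mul_le_mul_of_nonneg_left (add_le_add hNE hPE) hCL.le
    calc |(A (s + ε) - A s) / ε * (β^2 * N s) + 2 * β^2 * (aε s - a s) * D s|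
        ≤ C * L * (a₀⁻¹ * E s) + C * L * (a₀⁻¹ * E s + E s) := by linarith
      _ = δ₀ * L * E s := by rw [hδ₀]; ring
  -- Gronwall
  have hgron : ∀ x ∈ Set.Icc (0:ℝ) T, E x ≤ E 0 * Real.exp (δ₀ * L * x) := by
    have hcontE : ContinuousOn E (Set.Icc 0 T) := fun s hs =>
      (hEderiv s hs).continuousAt.continuousWithinAt
    have hderivE : ∀ x ∈ Set.Ico (0:ℝ) T, HasDerivWithinAt E (E' x) (Set.Ici x) x :=
      fun x hx => (hEderiv x (Set.Ico_subset_Icc_self hx)).hasDerivWithinAt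
    have hinit : ‖E 0‖ ≤ E 0 := by
      rw [Real.norm_eq_abs, abs_of_nonneg (hE_nonneg 0)]
    have hbd : ∀ x ∈ Set.Ico (0:ℝ) T, ‖E' x‖ ≤ δ₀ * L * ‖E x‖ + 0 := by
      intro x hx
      rw [Real.norm_eq_abs, Real.norm_eq_abs, abs_of_nonneg (hE_nonneg x), add_zero]
      exact hbound x (Set.Ico_subset_Icc_self hx)
    intro x hx
    have := norm_le_gronwallBound_of_norm_deriv_right_le hcontE hderivE hinit hbd x hx
    rw [Real.norm_eq_abs, abs_of_nonneg (hE_nonneg x)] at this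
    rwa [gronwallBound_ε0, sub_zero] at this
  -- conclusion
  have htmem := ht
  obtain ⟨ht0, htT⟩ := ht
  have hNval : β^2 * ‖v t‖^2 + ‖v' t‖^2 = β^2 * N t + P t := by
    rw [aux_normsq, aux_normsq]
  have hfinal1 : β^2 * N t + P t ≤ (a₀⁻¹ + 1) * E t := by
    have hβN : a₀ * (β^2 * N t) ≤ E t := by
      have h1 : a₀ * (β^2 * N t) ≤ aε t * (β^2 * N t) :=
        mul_le_mul_of_nonneg_right (haε_lb t)
          (mul_nonneg (sq_nonneg β) (hN_nonneg t))
      have h3 := hP_nonneg t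
      show a₀ * (β^2 * N t) ≤ aε t * (β^2 * N t) + P t
      linarith
    have hPE : P t ≤ E t := by
      have : 0 ≤ aε t * (β^2 * N t) :=
        mul_nonneg (ha₀.le.trans (haε_lb t)) (mul_nonneg (sq_nonneg β) (hN_nonneg t))
      show P t ≤ aε t * (β^2 * N t) + P t
      linarith
    have hNE : β^2 * N t ≤ a₀⁻¹ * E t := by
      have h0 : β^2 * N t = a₀⁻¹ * (a₀ * (β^2 * N t)) := by
        field_simp
      rw [h0]
      exact mul_le_mul_of_nonneg_left hβN (inv_nonneg.2 ha₀.le)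
    have hrw : (a₀⁻¹ + 1) * E t = a₀⁻¹ * E t + E t := by ring
    rw [hrw]
    exact add_le_add hNE hPE
  have hE0 : E 0 ≤ (Amax + 1) * (β^2 * ‖v₀‖^2 + ‖v₁‖^2) := by
    have hup := haε_ub 0
    have h1 : N 0 = ‖v₀‖^2 := by rw [hN]; simp only [hv0]; rw [aux_normsq]
    have h2 : P 0 = ‖v₁‖^2 := by rw [hP]; simp only [hv1]; rw [aux_normsq]
    have hN0 : 0 ≤ N 0 := hN_nonneg 0
    have hP0 : 0 ≤ P 0 := hP_nonneg 0
    show aε 0 * (β^2 * N 0) + P 0 ≤ (Amax + 1) * (β^2 * ‖v₀‖^2 + ‖v₁‖^2)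
    rw [← h1, ← h2]
    have hX : (0:ℝ) ≤ β^2 * N 0 := mul_nonneg (sq_nonneg β) hN0
    have h4 : aε 0 * (β^2 * N 0) ≤ Amax * (β^2 * N 0) :=
      mul_le_mul_of_nonneg_right hup hX
    have h5 : (0:ℝ) ≤ Amax * P 0 := mul_nonneg hAmax_pos.le hP0
    have hrw : (Amax + 1) * (β^2 * N 0 + P 0)
        = Amax * (β^2 * N 0) + (β^2 * N 0) + Amax * P 0 + P 0 := by ring
    rw [hrw]
    linarith
  have hexp : Real.exp (δ₀ * L * t) ≤ Real.exp (δ₀ * T) * β ^ (δ₀ * T) := by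
    have h1 : δ₀ * L * t ≤ δ₀ * L * T := by
      apply mul_le_mul_of_nonneg_left htT (by positivity)
    have h2 : δ₀ * L * T = δ₀ * T + Real.log β * (δ₀ * T) := by rw [hLdef]; ring
    calc Real.exp (δ₀ * L * t) ≤ Real.exp (δ₀ * L * T) := Real.exp_le_exp.2 h1
    _ = Real.exp (δ₀ * T) * Real.exp (Real.log β * (δ₀ * T)) := by
        rw [h2, Real.exp_add]
    _ = Real.exp (δ₀ * T) * β ^ (δ₀ * T) := by
        rw [Real.rpow_def_of_pos hβ0]
  have hEt := hgron t htmem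
  have hβpow_pos : (0:ℝ) < β ^ (δ₀ * T) := Real.rpow_pos_of_pos hβ0 _
  have hdata_nonneg : 0 ≤ β^2 * ‖v₀‖^2 + ‖v₁‖^2 := by positivity
  calc β ^ 2 * ‖v t‖ ^ 2 + ‖v' t‖ ^ 2 = β^2 * N t + P t := hNval
    _ ≤ (a₀⁻¹ + 1) * E t := hfinal1
    _ ≤ (a₀⁻¹ + 1) * (E 0 * Real.exp (δ₀ * L * t)) := by
        apply mul_le_mul_of_nonneg_left hEt (by positivity)
    _ ≤ (a₀⁻¹ + 1) * (((Amax + 1) * (β^2 * ‖v₀‖^2 + ‖v₁‖^2)) *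
          (Real.exp (δ₀ * T) * β ^ (δ₀ * T))) := by
        apply mul_le_mul_of_nonneg_left _ (by positivity)
        apply mul_le_mul hE0 hexp (Real.exp_pos _).le
        positivity
    _ = Mv ^ 2 * β ^ (δ₀ * T) * (β ^ 2 * ‖v₀‖ ^ 2 + ‖v₁‖ ^ 2) := by
        rw [hM2]; ring
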